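/- Let M be the monoid with presentation ⟨ a, a⁻¹, b, b⁻¹, h | aa⁻¹=a⁻¹a=bb⁻¹=b⁻¹b=1, xh=hx, hxy=hyx (x,y ∈ {a,a⁻¹,b,b⁻¹}), h²a=h²a⁻¹=h²b=h²b⁻¹=h³=h² ⟩. Then every element of M is represented by exactly one word in the set N = F(a,b) ∪ { h b^j a^k : j,k ∈ ℤ } ∪ { h² }, where F(a,b) denotes the set of reduced words of the free group on {a,b}. -/

import Mathlib

/-- The five generating letters `a, a⁻¹, b, b⁻¹, h`. -/
inductive L : Type
  | a | a' | b | b' | h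
deriving DecidableEq

/-- Words over the five letters. -/
abbrev W : Type := FreeMonoid L

/-- The one-letter word. -/
def gen (x : L) : W := FreeMonoid.of x

open L in
/-- The defining relations of the monoid `M`. -/
inductive rel : W → W → Prop
  | inv_aa' : rel (gen a * gen a') 1
  | inv_a'a : rel (gen a' * gen a) 1
  | inv_bb' : rel (gen b * gen b') 1
  | inv_b'b : rel (gen b' * gen b) 1
  | comm (x : L) (hx : x ≠ h) : rel (gen x * gen h) (gen h * gen x)
  | swap (x y : L) (hx : x ≠ h) (hy : y ≠ h) :
      rel (gen h * gen x * gen y) (gen h * gen y * gen x)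
  | zero (x : L) (hx : x ≠ h) : rel (gen h * gen h * gen x) (gen h * gen h)
  | zero_h : rel (gen h * gen h * gen h) (gen h * gen h)

/-- The congruence on the free monoid generated by the defining relations. -/
def Mcon : Con W := conGen rel

/-- The monoid `M` defined by the presentation. -/
abbrev M : Type := Mcon.Quotient

/-- The canonical projection from words to elements of `M`. -/
def π : W →* M := Mcon.mk'


lemma mrel {u v : W} (hr : rel u v) : π u = π v := (Mcon.eq).mpr (ConGen.Rel.of u v hr)

def pl (x : L) : M := π (gen x)
def H : M := pl L.h

def ua : Mˣ :=
  ⟨pl L.a, pl L.a', by simpa [pl, map_mul] using mrel rel.inv_aa',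
    by simpa [pl, map_mul] using mrel rel.inv_a'a⟩
def ub : Mˣ :=
  ⟨pl L.b, pl L.b', by simpa [pl, map_mul] using mrel rel.inv_bb',
    by simpa [pl, map_mul] using mrel rel.inv_b'b⟩

def NH : Submonoid M := Submonoid.closure {m | ∃ x : L, x ≠ L.h ∧ m = pl x}

lemma pl_mem_NH {x : L} (hx : x ≠ L.h) : pl x ∈ NH :=
  Submonoid.subset_closure ⟨x, hx, rfl⟩

lemma pl_comm_H {x : L} (hx : x ≠ L.h) : pl x * H = H * pl x := by
  simpa [pl, H, map_mul] using mrel (rel.comm x hx)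

lemma NH_comm_H {t : M} (ht : t ∈ NH) : t * H = H * t := by
  induction ht using Submonoid.closure_induction with
  | mem m hm => obtain ⟨x, hx, rfl⟩ := hm; exact pl_comm_H hx
  | one => simp
  | mul s t hs ht ihs iht => rw [mul_assoc, iht, ← mul_assoc, ihs, mul_assoc]

lemma swap_front {x y : L} (hx : x ≠ L.h) (hy : y ≠ L.h) :
    H * pl x * pl y = H * pl y * pl x := by
  simpa [pl, H, map_mul] using mrel (rel.swap x y hx hy)

lemma Hswap_gen {x : L} (hx : x ≠ L.h) {t : M} (ht : t ∈ NH) :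
    H * pl x * t = H * t * pl x := by
  induction ht using Submonoid.closure_induction with
  | mem m hm => obtain ⟨y, hy, rfl⟩ := hm; exact swap_front hx hy
  | one => simp
  | mul s t hs ht ihs iht =>
      calc H * pl x * (s * t) = H * pl x * s * t := by simp [mul_assoc]
        _ = H * s * pl x * t := by rw [ihs]
        _ = s * (H * pl x * t) := by rw [← NH_comm_H hs]; simp [mul_assoc]
        _ = s * (H * t * pl x) := by rw [iht]
        _ = (s * H) * t * pl x := by simp [mul_assoc]
        _ = H * (s * t) * pl x := by rw [NH_comm_H hs]; simp [mul_assoc]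

lemma Hswap {s t : M} (hs : s ∈ NH) (ht : t ∈ NH) :
    H * s * t = H * t * s := by
  induction hs using Submonoid.closure_induction with
  | mem m hm => obtain ⟨x, hx, rfl⟩ := hm; exact Hswap_gen hx ht
  | one => simp
  | mul u v hu hv ihu ihv =>
      calc H * (u * v) * t = (H * u) * v * t := by simp [mul_assoc]
        _ = u * (H * v * t) := by rw [← NH_comm_H hu]; simp [mul_assoc]
        _ = u * (H * t * v) := by rw [ihv]
        _ = (u * H) * t * v := by simp [mul_assoc]
        _ = (H * u * t) * v := by rw [NH_comm_H hu]
        _ = (H * t * u) * v := by rw [ihu]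
        _ = H * t * (u * v) := by simp [mul_assoc]

lemma Hswap3 {s m n : M} (hs : s ∈ NH) (hm : m ∈ NH) (hn : n ∈ NH) :
    H * s * m * n = H * s * n * m := by
  calc H * s * m * n = s * (H * m * n) := by rw [← NH_comm_H hs]; simp [mul_assoc]
    _ = s * (H * n * m) := by rw [Hswap hm hn]
    _ = (s * H) * n * m := by simp [mul_assoc]
    _ = H * s * n * m := by rw [NH_comm_H hs]

lemma HH_absorb {t : M} (ht : t ∈ NH) : H * H * t = H * H := by
  induction ht using Submonoid.closure_induction with
  | mem m hm =>
      obtain ⟨x, hx, rfl⟩ := hm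
      simpa [pl, H, map_mul] using mrel (rel.zero x hx)
  | one => simp
  | mul s t hs ht ihs iht => rw [← mul_assoc, ihs, iht]

lemma HHH : H * H * H = H * H := by
  simpa [pl, H, map_mul] using mrel rel.zero_h

-- words
def nonH (l : List L) : Prop := ∀ x ∈ l, x ≠ L.h

lemma word_mem_NH {l : List L} (hl : nonH l) : π (FreeMonoid.ofList l) ∈ NH := by
  induction l with
  | nil => exact one_mem _
  | cons x t ih =>
      rw [FreeMonoid.ofList_cons, map_mul]
      exact mul_mem (pl_mem_NH (hl x (by simp))) (ih fun y hy => hl y (by simp [hy]))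

lemma word_comm_H {l : List L} (hl : nonH l) :
    π (FreeMonoid.ofList l) * H = H * π (FreeMonoid.ofList l) :=
  NH_comm_H (word_mem_NH hl)




/-- Formal inversion of the letters `a, a⁻¹, b, b⁻¹` (fixing `h`). -/
def invL : L → L
  | L.a => L.a' | L.a' => L.a | L.b => L.b' | L.b' => L.b | L.h => L.h

/-- A word is a reduced word of the free group `F(a,b)` if it involves only the
letters `a, a⁻¹, b, b⁻¹` and contains no factor `x x⁻¹`. -/
def ReducedAB (w : W) : Prop :=
  (∀ x ∈ FreeMonoid.toList w, x ≠ L.h) ∧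
  List.Chain' (fun x y => y ≠ invL x) (FreeMonoid.toList w)

/-- The word `p^k` (for `k ≥ 0`), resp. `q^(-k)` (for `k < 0`), encoding an
integer power of a generator with formal inverse `q`. -/
def zw (p q : L) (k : ℤ) : W :=
  if 0 ≤ k then gen p ^ k.toNat else gen q ^ (-k).toNat

/-- The set of normal forms `𝒩 = F(a,b) ∪ { h b^j a^k : j,k ∈ ℤ } ∪ {h²}`. -/
def NF : Set W :=
  {w | ReducedAB w} ∪
  {w | ∃ j k : ℤ, w = gen L.h * zw L.b L.b' j * zw L.a L.a' k} ∪
  {gen L.h * gen L.h}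

lemma pi_zw {p q : L} {u : Mˣ} (hp : pl p = u) (hq : pl q = ↑u⁻¹) (k : ℤ) :
    π (zw p q k) = ↑(u ^ k) := by
  unfold zw
  split
  · rename_i hk
    have h1 : u ^ k = u ^ k.toNat := by
      rw [← zpow_natCast, Int.toNat_of_nonneg hk]
    rw [map_pow, h1, Units.val_pow_eq_pow_val, ← hp]; rfl
  · rename_i hk
    have h1 : u ^ k = (u⁻¹) ^ (-k).toNat := by
      rw [← zpow_natCast, Int.toNat_of_nonneg (by omega), zpow_neg, ← zpow_neg]
      norm_num
    rw [map_pow, h1, Units.val_pow_eq_pow_val, ← hq]; rfl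

lemma zw_mem_NH (p q : L) (hp : p ≠ L.h) (hq : q ≠ L.h) (k : ℤ) : π (zw p q k) ∈ NH := by
  unfold zw; split <;> rw [map_pow] <;> exact pow_mem (pl_mem_NH (by assumption)) _

def wa : L → ℤ | L.a => 1 | L.a' => -1 | _ => 0
def wb : L → ℤ | L.b => 1 | L.b' => -1 | _ => 0
def asum (l : List L) : ℤ := (l.map wa).sum
def bsum (l : List L) : ℤ := (l.map wb).sum

lemma asum_append (t : List L) (x : L) : asum (t ++ [x]) = asum t + wa x := by
  simp [asum]
lemma bsum_append (t : List L) (x : L) : bsum (t ++ [x]) = bsum t + wb x := by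
  simp [bsum]

lemma val_mul_val (u : Mˣ) (k m : ℤ) : (↑(u^k) : M) * ↑(u^m) = ↑(u^(k+m)) := by
  rw [← Units.val_mul, ← zpow_add]

lemma pl_a_eq : pl L.a = ↑(ua ^ (1:ℤ)) := by rw [zpow_one]; rfl
lemma pl_a'_eq : pl L.a' = ↑(ua ^ (-1:ℤ)) := by rw [zpow_neg_one]; rfl
lemma pl_b_eq : pl L.b = ↑(ub ^ (1:ℤ)) := by rw [zpow_one]; rfl
lemma pl_b'_eq : pl L.b' = ↑(ub ^ (-1:ℤ)) := by rw [zpow_neg_one]; rfl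

lemma pi_zw_a (k : ℤ) : π (zw L.a L.a' k) = ↑(ua ^ k) := pi_zw rfl rfl k
lemma pi_zw_b (k : ℤ) : π (zw L.b L.b' k) = ↑(ub ^ k) := pi_zw rfl rfl k

lemma ua_zpow_mem (k : ℤ) : (↑(ua^k) : M) ∈ NH := by
  rw [← pi_zw_a]; exact zw_mem_NH _ _ (by simp) (by simp) k
lemma ub_zpow_mem (k : ℤ) : (↑(ub^k) : M) ∈ NH := by
  rw [← pi_zw_b]; exact zw_mem_NH _ _ (by simp) (by simp) k

lemma mul_pl_a (s : M) (k : ℤ) : s * ↑(ua^k) * pl L.a = s * ↑(ua^(k+1)) := by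
  rw [pl_a_eq, mul_assoc, val_mul_val]
lemma mul_pl_a' (s : M) (k : ℤ) : s * ↑(ua^k) * pl L.a' = s * ↑(ua^(k-1)) := by
  rw [pl_a'_eq, mul_assoc, val_mul_val]; ring_nf
lemma mul_pl_b (s : M) (k : ℤ) : s * ↑(ub^k) * pl L.b = s * ↑(ub^(k+1)) := by
  rw [pl_b_eq, mul_assoc, val_mul_val]
lemma mul_pl_b' (s : M) (k : ℤ) : s * ↑(ub^k) * pl L.b' = s * ↑(ub^(k-1)) := by
  rw [pl_b'_eq, mul_assoc, val_mul_val]; ring_nf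

lemma hlevel (l : List L) (hl : nonH l) :
    H * π (FreeMonoid.ofList l) = H * ↑(ub ^ bsum l) * ↑(ua ^ asum l) := by
  induction l using List.reverseRecOn with
  | nil => simp [asum, bsum]
  | append_singleton t x ih =>
    have hnt : nonH t := fun y hy => hl y (by simp [hy])
    have hx : x ≠ L.h := hl x (by simp)
    have expand : FreeMonoid.ofList (t ++ [x]) = FreeMonoid.ofList t * gen x := by
      simp [FreeMonoid.ofList_append, FreeMonoid.ofList_cons]; rfl
    rw [expand, map_mul, ← mul_assoc, ih hnt]
    have hgen : π (gen x) = pl x := rfl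
    rw [hgen]
    cases x with
    | a =>
        rw [asum_append, bsum_append, mul_assoc, pl_a_eq, val_mul_val]
        simp [wa, wb]
    | a' =>
        rw [asum_append, bsum_append, mul_assoc, pl_a'_eq, val_mul_val]
        simp [wa, wb]
    | b =>
        rw [Hswap3 (ub_zpow_mem _) (ua_zpow_mem _) (pl_mem_NH (by simp)),
          asum_append, bsum_append]
        rw [mul_assoc H, pl_b_eq, val_mul_val]
        simp [wa, wb]
    | b' =>
        rw [Hswap3 (ub_zpow_mem _) (ua_zpow_mem _) (pl_mem_NH (by simp)),
          asum_append, bsum_append]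
        rw [mul_assoc H, pl_b'_eq, val_mul_val]
        simp [wa, wb]
    | h => exact absurd rfl hx

lemma one_mem_NF : (1 : W) ∈ NF := by
  left; left
  constructor <;> simp [FreeMonoid.toList_one, List.Chain']

lemma pi_lin (j k : ℤ) :
    π (gen L.h * zw L.b L.b' j * zw L.a L.a' k) = H * ↑(ub^j) * ↑(ua^k) := by
  rw [map_mul, map_mul, pi_zw_a, pi_zw_b]; rfl

lemma cancel_pair {y : L} (hy : y ≠ L.h) : pl y * pl (invL y) = 1 := by
  cases y with
  | a => simpa [pl, invL, map_mul] using mrel rel.inv_aa'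
  | a' => simpa [pl, invL, map_mul] using mrel rel.inv_a'a
  | b => simpa [pl, invL, map_mul] using mrel rel.inv_bb'
  | b' => simpa [pl, invL, map_mul] using mrel rel.inv_b'b
  | h => exact absurd rfl hy

lemma step (n : W) (hn : n ∈ NF) (x : L) : ∃ n' ∈ NF, π n' = π n * pl x := by
  rcases hn with (hred | ⟨j, k, rfl⟩) | hhh
  · -- reduced case
    by_cases hx : x = L.h
    · subst hx
      refine ⟨gen L.h * zw L.b L.b' (bsum (FreeMonoid.toList n)) *
        zw L.a L.a' (asum (FreeMonoid.toList n)), Or.inl (Or.inr ⟨_, _, rfl⟩), ?_⟩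
      have h1 := hlevel (FreeMonoid.toList n) hred.1
      rw [FreeMonoid.ofList_toList] at h1
      rw [pi_lin, ← h1]
      exact (NH_comm_H (by
        have := word_mem_NH (l := FreeMonoid.toList n) hred.1
        rwa [FreeMonoid.ofList_toList] at this)).symm
    · rcases List.eq_nil_or_concat (FreeMonoid.toList n) with hnil | ⟨t, y, hconcat⟩
      on_goal 2 => rw [List.concat_eq_append] at hconcat
      · have hn1 : n = 1 := by
          have : FreeMonoid.ofList (FreeMonoid.toList n) = FreeMonoid.ofList [] := by
            rw [hnil]
          simpa [FreeMonoid.ofList_toList] using this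
        refine ⟨gen x, Or.inl (Or.inl ⟨by simp [gen, hx], by simp [gen, List.Chain']⟩), ?_⟩
        rw [hn1]; simp [pl]
      · have hyne : y ≠ L.h := hred.1 y (by simp [hconcat])
        by_cases hc : x = invL y
        · -- cancellation
          refine ⟨FreeMonoid.ofList t, Or.inl (Or.inl ?_), ?_⟩
          · constructor
            · intro z hz
              exact hred.1 z (by simp [hconcat, FreeMonoid.toList_ofList] at hz ⊢; tauto)
            · have := hred.2
              rw [hconcat] at this; unfold List.Chain' at this; rw [List.isChain_append] at this
              simpa [FreeMonoid.toList_ofList, List.Chain'] using this.1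
          · have hn2 : n = FreeMonoid.ofList t * gen y := by
              have : FreeMonoid.ofList (FreeMonoid.toList n) =
                  FreeMonoid.ofList (t ++ [y]) := by rw [hconcat]
              simpa [FreeMonoid.ofList_toList, FreeMonoid.ofList_append,
                FreeMonoid.ofList_cons, gen] using this
            rw [hn2, map_mul, mul_assoc]
            have : π (gen y) * pl x = 1 := by
              rw [hc]; exact cancel_pair hyne
            rw [show π (gen y) * pl x = pl y * pl x from rfl] at this ⊢
            rw [this, mul_one]
        · -- append
          refine ⟨n * gen x, Or.inl (Or.inl ?_), by rw [map_mul]; rfl⟩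
          constructor
          · intro z hz
            rw [FreeMonoid.toList_mul] at hz
            simp [gen] at hz
            rcases hz with hz | hz
            · exact hred.1 z hz
            · subst hz; exact hx
          · rw [FreeMonoid.toList_mul]
            unfold List.Chain'; rw [List.isChain_append]
            refine ⟨hred.2, by simp [gen], ?_⟩
            intro p hp q hq
            simp [gen] at hq
            subst hq
            rw [hconcat] at hp
            simp at hp
            rw [← hp]
            exact hc
  · -- lin case
    by_cases hx : x = L.h
    · subst hx
      refine ⟨gen L.h * gen L.h, Or.inr rfl, ?_⟩
      rw [pi_lin]
      have hs := ub_zpow_mem j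
      have ht := ua_zpow_mem k
      have : H * ↑(ub^j) * ↑(ua^k) * pl L.h = H * H * ↑(ub^j) * ↑(ua^k) := by
        show H * ↑(ub^j) * ↑(ua^k) * H = _
        rw [mul_assoc, NH_comm_H ht, ← mul_assoc, mul_assoc H, NH_comm_H hs, ← mul_assoc]
      rw [this, mul_assoc (H*H), HH_absorb (mul_mem hs ht)]
      simp [pl, H, map_mul]
    · cases x with
      | a =>
          refine ⟨gen L.h * zw L.b L.b' j * zw L.a L.a' (k+1),
            Or.inl (Or.inr ⟨_, _, rfl⟩), ?_⟩
          rw [pi_lin, pi_lin, mul_pl_a]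
      | a' =>
          refine ⟨gen L.h * zw L.b L.b' j * zw L.a L.a' (k-1),
            Or.inl (Or.inr ⟨_, _, rfl⟩), ?_⟩
          rw [pi_lin, pi_lin, mul_pl_a']
      | b =>
          refine ⟨gen L.h * zw L.b L.b' (j+1) * zw L.a L.a' k,
            Or.inl (Or.inr ⟨_, _, rfl⟩), ?_⟩
          rw [pi_lin, pi_lin,
            Hswap3 (ub_zpow_mem _) (ua_zpow_mem _) (pl_mem_NH (by simp)),
            mul_pl_b]
      | b' =>
          refine ⟨gen L.h * zw L.b L.b' (j-1) * zw L.a L.a' k,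
            Or.inl (Or.inr ⟨_, _, rfl⟩), ?_⟩
          rw [pi_lin, pi_lin,
            Hswap3 (ub_zpow_mem _) (ua_zpow_mem _) (pl_mem_NH (by simp)),
            mul_pl_b']
      | h => exact absurd rfl hx
  · -- h² case
    have hn2 : n = gen L.h * gen L.h := hhh
    subst hn2
    refine ⟨gen L.h * gen L.h, Or.inr rfl, ?_⟩
    have hπ : π (gen L.h * gen L.h) = H * H := by simp [pl, H, map_mul]
    rw [hπ]
    by_cases hx : x = L.h
    · subst hx; exact HHH.symm
    · exact (HH_absorb (pl_mem_NH hx)).symm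

lemma exists_nf (w : W) : ∃ n ∈ NF, π n = π w := by
  have key : ∀ l : List L, ∃ n ∈ NF, π n = π (FreeMonoid.ofList l) := by
    intro l
    induction l using List.reverseRecOn with
    | nil => exact ⟨1, one_mem_NF, rfl⟩
    | append_singleton t x ih =>
        obtain ⟨n, hn, hπ⟩ := ih
        obtain ⟨n', hn', hπ'⟩ := step n hn x
        refine ⟨n', hn', ?_⟩
        rw [hπ', hπ]
        rw [show FreeMonoid.ofList (t ++ [x]) = FreeMonoid.ofList t * gen x by
          simp [FreeMonoid.ofList_append, FreeMonoid.ofList_cons]; rfl, map_mul]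
        rfl
  have := key (FreeMonoid.toList w)
  rwa [FreeMonoid.ofList_toList] at this

-- part 4: invariant model monoid
def eexp : FreeGroup Bool →* Multiplicative (ℤ × ℤ) :=
  FreeGroup.lift fun t => Multiplicative.ofAdd (if t then ((0:ℤ), (1:ℤ)) else ((1:ℤ), (0:ℤ)))

def e (g : FreeGroup Bool) : ℤ × ℤ := Multiplicative.toAdd (eexp g)

lemma e_mul (g g' : FreeGroup Bool) : e (g * g') = e g + e g' := by
  simp [e, map_mul]
lemma e_one : e 1 = 0 := by simp [e]

inductive T0 : Type
  | free : FreeGroup Bool → T0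
  | lin : ℤ → ℤ → T0
  | top : T0

def tmul : T0 → T0 → T0
  | .free g, .free g' => .free (g * g')
  | .free g, .lin j k => .lin (j + (e g).1) (k + (e g).2)
  | .lin j k, .free g => .lin (j + (e g).1) (k + (e g).2)
  | .lin _ _, .lin _ _ => .top
  | .top, _ => .top
  | _, .top => .top

instance : Mul T0 := ⟨tmul⟩
instance : One T0 := ⟨.free 1⟩

@[simp] lemma free_mul_free (g g') : (T0.free g) * (T0.free g') = T0.free (g * g') := rfl
@[simp] lemma free_mul_lin (g j k) :
    (T0.free g) * (T0.lin j k) = T0.lin (j + (e g).1) (k + (e g).2) := rfl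
@[simp] lemma lin_mul_free (j k g) :
    (T0.lin j k) * (T0.free g) = T0.lin (j + (e g).1) (k + (e g).2) := rfl
@[simp] lemma lin_mul_lin (j k j' k') : (T0.lin j k) * (T0.lin j' k') = T0.top := rfl
@[simp] lemma top_mul (t) : T0.top * t = T0.top := by cases t <;> rfl
@[simp] lemma mul_top (t) : t * T0.top = T0.top := by cases t <;> rfl
lemma one_def : (1 : T0) = T0.free 1 := rfl

instance : Monoid T0 where
  mul_assoc x y z := by
    rcases x with g|⟨j,k⟩|_ <;> rcases y with g'|⟨j',k'⟩|_ <;> rcases z with g''|⟨j'',k''⟩|_ <;>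
      simp [mul_assoc, e_mul] <;> omega
  one_mul t := by cases t <;> simp [one_def, e_one]
  mul_one t := by cases t <;> simp [one_def, e_one]

def fgl : L → FreeGroup Bool
  | L.a => .of true | L.a' => (.of true)⁻¹
  | L.b => .of false | L.b' => (.of false)⁻¹ | L.h => 1

def φf : L → T0
  | L.h => T0.lin 0 0
  | x => T0.free (fgl x)

lemma φf_ne (x : L) (hx : x ≠ L.h) : φf x = T0.free (fgl x) := by
  cases x <;> first | rfl | exact absurd rfl hx

def φ0 : W →* T0 := FreeMonoid.lift φf

@[simp] lemma φ0_gen (x : L) : φ0 (gen x) = φf x := FreeMonoid.lift_eval_of φf x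

lemma rel_ker_phi {u v : W} (hr : rel u v) : φ0 u = φ0 v := by
  cases hr with
  | inv_aa' => simp [map_mul, map_one, φf, fgl, one_def]
  | inv_a'a => simp [map_mul, map_one, φf, fgl, one_def]
  | inv_bb' => simp [map_mul, map_one, φf, fgl, one_def]
  | inv_b'b => simp [map_mul, map_one, φf, fgl, one_def]
  | comm x hx => simp [map_mul, φf_ne x hx, φf]
  | swap x y hx hy =>
      simp [map_mul, φf_ne x hx, φf_ne y hy, φf]
      omega
  | zero x hx => simp [map_mul, φf_ne x hx, φf]
  | zero_h => simp [map_mul, φf]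

lemma congr_phi {u v : W} (h : π u = π v) : φ0 u = φ0 v := by
  have hle : Mcon ≤ Con.ker φ0 :=
    Con.conGen_le.mpr fun x y hr => (Con.ker_rel φ0).mpr (rel_ker_phi hr)
  exact (Con.ker_rel φ0).mp (hle (Mcon.eq.mp h))

def m2 : L → Bool × Bool
  | L.a => (true, true) | L.a' => (true, false)
  | L.b => (false, true) | L.b' => (false, false) | L.h => (true, true)

lemma fgl_eq_mk (x : L) (hx : x ≠ L.h) : fgl x = FreeGroup.mk [m2 x] := by
  cases x <;> first | rfl | exact absurd rfl hx

lemma φ0_word (l : List L) (hl : nonH l) :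
    φ0 (FreeMonoid.ofList l) = T0.free (FreeGroup.mk (l.map m2)) := by
  induction l with
  | nil =>
      show (1 : T0) = _
      simp [one_def, ← FreeGroup.one_eq_mk]
  | cons x t ih =>
      have hx : x ≠ L.h := hl x (by simp)
      rw [FreeMonoid.ofList_cons, map_mul,
        show φ0 (FreeMonoid.of x) = φf x from FreeMonoid.lift_eval_of φf x,
        φf_ne x hx, ih (fun z hz => hl z (by simp [hz])), free_mul_free,
        fgl_eq_mk x hx, FreeGroup.mul_mk]
      simp

lemma free_pow (g : FreeGroup Bool) (n : ℕ) : (T0.free g)^n = T0.free (g^n) := by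
  induction n with
  | zero => simp [one_def]
  | succ n ih => rw [pow_succ, pow_succ, ih, free_mul_free]

lemma φ0_zw_a (k : ℤ) : ∃ g, φ0 (zw L.a L.a' k) = T0.free g ∧ e g = (0, k) := by
  unfold zw; split <;> rename_i hk
  · refine ⟨(FreeGroup.of true)^k.toNat, ?_, ?_⟩
    · rw [map_pow, show φ0 (gen L.a) = T0.free (FreeGroup.of true) from rfl, free_pow]
    · simp [e, map_pow, toAdd_pow, eexp]
      omega
  · refine ⟨((FreeGroup.of true)⁻¹)^(-k).toNat, ?_, ?_⟩
    · rw [map_pow, show φ0 (gen L.a') = T0.free ((FreeGroup.of true)⁻¹) from rfl, free_pow]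
    · simp [e, map_pow, map_inv, toAdd_pow, toAdd_inv, eexp]
      omega

lemma φ0_zw_b (k : ℤ) : ∃ g, φ0 (zw L.b L.b' k) = T0.free g ∧ e g = (k, 0) := by
  unfold zw; split <;> rename_i hk
  · refine ⟨(FreeGroup.of false)^k.toNat, ?_, ?_⟩
    · rw [map_pow, show φ0 (gen L.b) = T0.free (FreeGroup.of false) from rfl, free_pow]
    · simp [e, map_pow, toAdd_pow, eexp]
      omega
  · refine ⟨((FreeGroup.of false)⁻¹)^(-k).toNat, ?_, ?_⟩
    · rw [map_pow, show φ0 (gen L.b') = T0.free ((FreeGroup.of false)⁻¹) from rfl, free_pow]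
    · simp [e, map_pow, map_inv, toAdd_pow, toAdd_inv, eexp]
      omega

lemma φ0_lin (j k : ℤ) :
    φ0 (gen L.h * zw L.b L.b' j * zw L.a L.a' k) = T0.lin j k := by
  obtain ⟨gb, hb, heb⟩ := φ0_zw_b j
  obtain ⟨ga, ha, hea⟩ := φ0_zw_a k
  rw [map_mul, map_mul, hb, ha, φ0_gen,
    show φf L.h = T0.lin 0 0 from rfl, lin_mul_free, lin_mul_free, heb, hea]
  norm_num

lemma φ0_hh : φ0 (gen L.h * gen L.h) = T0.top := by
  rw [map_mul, φ0_gen, show φf L.h = T0.lin 0 0 from rfl, lin_mul_lin]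

lemma reduce_self {Lst : List (Bool × Bool)}
    (h : List.Chain' (fun s t => ¬(s.1 = t.1 ∧ s.2 = !t.2)) Lst) :
    FreeGroup.reduce Lst = Lst := by
  induction Lst with
  | nil => rfl
  | cons x t ih =>
      rw [FreeGroup.reduce.cons, ih h.tail]
      cases t with
      | nil => rfl
      | cons y t' =>
          have hxy := (List.isChain_cons_cons.mp h).1
          show (if x.1 = y.1 ∧ x.2 = !y.2 then t' else x :: y :: t') = x :: y :: t'
          rw [if_neg hxy]

lemma chain_map {l : List L} (h1 : nonH l)
    (h2 : List.Chain' (fun x y => y ≠ invL x) l) :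
    List.Chain' (fun s t => ¬(s.1 = t.1 ∧ s.2 = !t.2)) (l.map m2) := by
  induction l with
  | nil => simp [List.Chain']
  | cons x t ih =>
      cases t with
      | nil => simp [List.Chain']
      | cons y t' =>
          unfold List.Chain'; rw [List.map_cons, List.map_cons, List.isChain_cons_cons]
          constructor
          · have hx : x ≠ L.h := h1 x (by simp)
            have hy : y ≠ L.h := h1 y (by simp)
            have hxy : y ≠ invL x := (List.isChain_cons_cons.mp h2).1
            revert hx hy hxy
            cases x <;> cases y <;> decide
          · rw [← List.map_cons]
            exact ih (fun z hz => h1 z (by simp [hz])) (List.isChain_cons_cons.mp h2).2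

lemma map_m2_inj : ∀ (l1 l2 : List L), nonH l1 → nonH l2 →
    l1.map m2 = l2.map m2 → l1 = l2 := by
  intro l1
  induction l1 with
  | nil => intro l2 _ _ hm; cases l2 <;> simp_all
  | cons x t ih =>
      intro l2 h1 h2 hm
      cases l2 with
      | nil => simp_all
      | cons y s =>
          simp only [List.map_cons, List.cons.injEq] at hm
          have hx : x ≠ L.h := h1 x (by simp)
          have hy : y ≠ L.h := h2 y (by simp)
          have hxy : x = y := by
            have hm1 := hm.1
            revert hm1 hx hy
            cases x <;> cases y <;> decide
          subst hxy
          rw [ih s (fun z hz => h1 z (by simp [hz])) (fun z hz => h2 z (by simp [hz])) hm.2]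

lemma nf_unique {w1 w2 : W} (h1 : w1 ∈ NF) (h2 : w2 ∈ NF) (hπ : π w1 = π w2) :
    w1 = w2 := by
  have hφ := congr_phi hπ
  have red_val : ∀ w : W, ReducedAB w →
      φ0 w = T0.free (FreeGroup.mk ((FreeMonoid.toList w).map m2)) := by
    intro w hw
    have := φ0_word (FreeMonoid.toList w) hw.1
    rwa [FreeMonoid.ofList_toList] at this
  rcases h1 with (hr1 | ⟨j1, k1, rfl⟩) | hh1 <;>
    rcases h2 with (hr2 | ⟨j2, k2, rfl⟩) | hh2
  · -- red red
    rw [red_val _ hr1, red_val _ hr2] at hφ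
    simp only [T0.free.injEq] at hφ
    have hred := FreeGroup.reduce.sound hφ
    rw [reduce_self (chain_map hr1.1 hr1.2), reduce_self (chain_map hr2.1 hr2.2)] at hred
    have := map_m2_inj _ _ hr1.1 hr2.1 hred
    calc w1 = FreeMonoid.ofList (FreeMonoid.toList w1) := rfl
      _ = FreeMonoid.ofList (FreeMonoid.toList w2) := by rw [this]
      _ = w2 := rfl
  · rw [red_val _ hr1, φ0_lin] at hφ; exact absurd hφ (by simp)
  · have hw2 : w2 = gen L.h * gen L.h := Set.eq_of_mem_singleton hh2
    subst hw2
    rw [red_val _ hr1, φ0_hh] at hφ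
    exact absurd hφ (by simp)
  · rw [φ0_lin, red_val _ hr2] at hφ; exact absurd hφ (by simp)
  · rw [φ0_lin, φ0_lin] at hφ
    simp only [T0.lin.injEq] at hφ
    rw [hφ.1, hφ.2]
  · have hw2 : w2 = gen L.h * gen L.h := Set.eq_of_mem_singleton hh2
    subst hw2
    rw [φ0_lin, φ0_hh] at hφ
    exact absurd hφ (by simp)
  · have hw1 : w1 = gen L.h * gen L.h := Set.eq_of_mem_singleton hh1
    subst hw1
    rw [red_val _ hr2, φ0_hh] at hφ
    exact absurd hφ (by simp)
  · have hw1 : w1 = gen L.h * gen L.h := Set.eq_of_mem_singleton hh1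
    subst hw1
    rw [φ0_lin, φ0_hh] at hφ
    exact absurd hφ (by simp)
  · rw [Set.eq_of_mem_singleton hh1, Set.eq_of_mem_singleton hh2]


/-- Every element of `M` is represented by exactly one word in
the set of normal forms `𝒩`. -/
theorem stmt_14 : ∀ m : M, ∃! w : W, w ∈ NF ∧ π w = m := by
  intro m
  obtain ⟨u, rfl⟩ := Con.mk'_surjective (c := Mcon) m
  obtain ⟨n, hn, hπ⟩ := exists_nf u
  refine ⟨n, ⟨hn, hπ⟩, ?_⟩
  rintro y ⟨hy, hπy⟩
  exact nf_unique hy hn (by rw [hπy, hπ]; rfl)
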